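/- For every k ≥ 1, the ℓ¹ Lie norm of the k-th Lie Magnus commutator is bounded by (1/k) times the ℓ¹ norm of the k-th Magnus commutator: ‖μ_k^Lie(X_1,…,X_k)‖ ≤ (1/k) · |μ_k(X_1,…,X_k)|_{ℓ¹}. (Dynkin–Specht–Wever bound; equivalently Θ_k^Lie ≤ Θ_k / k.) -/

import Mathlib

open scoped Classical BigOperators

noncomputable section

/-- Number of descents of a permutation of `Fin k`:
`des σ = #{1 ≤ i ≤ k−1 : σ(i) > σ(i+1)}`. -/
def descents {k : ℕ} (σ : Equiv.Perm (Fin k)) : ℕ :=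
  (Finset.univ.filter fun i : Fin k =>
    ∃ h : (i : ℕ) + 1 < k, σ ⟨(i : ℕ) + 1, h⟩ < σ i).card

/-- Number of ascents of a permutation of `Fin k`: `asc σ = (k−1) − des σ`. -/
def ascents {k : ℕ} (σ : Equiv.Perm (Fin k)) : ℕ := (k - 1) - descents σ

/-- The `k`-th Magnus commutator in the free associative algebra
(Mielnik–Plebański formula):
`μ_k(X_1,…,X_k) = Σ_{σ ∈ S_k} (−1)^{des σ} (asc σ)!(des σ)!/k! · X_{σ(1)} ⋯ X_{σ(k)}`. -/
def magnus (R : Type*) [Field R] (k : ℕ) : FreeAlgebra R (Fin k) :=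
  ∑ σ : Equiv.Perm (Fin k),
    ((-1 : R) ^ descents σ * ((ascents σ).factorial : R) * ((descents σ).factorial : R) /
        (k.factorial : R)) •
      (List.ofFn fun i : Fin k => FreeAlgebra.ι R (σ i)).prod

/-- Right-nested Lie bracket of a list: `[a₁,…,aₖ] ↦ ⁅a₁, ⁅a₂, ⁅…, aₖ⁆…⁆⁆`. -/
def rightBracket {L : Type*} [LieRing L] : List L → L
  | [] => 0
  | [a] => a
  | a :: (b :: rest) => ⁅a, rightBracket (b :: rest)⁆

/-- The `k`-th Lie Magnus commutator (Dynkin form):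
`μ_k^Lie = Σ_{σ ∈ S_k} (−1)^{des σ} (asc σ)!(des σ)!/(k!·k) ·
  ⁅X_{σ(1)}, ⁅…, ⁅X_{σ(k−1)}, X_{σ(k)}⁆…⁆⁆`. -/
def magnusLie (R : Type*) [Field R] (k : ℕ) : FreeLieAlgebra R (Fin k) :=
  ∑ σ : Equiv.Perm (Fin k),
    ((-1 : R) ^ descents σ * ((ascents σ).factorial : R) * ((descents σ).factorial : R) /
        ((k.factorial : R) * (k : R))) •
      rightBracket (List.ofFn fun i : Fin k => FreeLieAlgebra.of R (σ i))

/-- Lie monomials: the smallest subset of the free Lie algebra containing the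
canonical generators and closed under the Lie bracket. -/
inductive IsLieMonomial {R : Type*} [CommRing R] {X : Type*} : FreeLieAlgebra R X → Prop
  | of (x : X) : IsLieMonomial (FreeLieAlgebra.of R x)
  | bracket {a b : FreeLieAlgebra R X} : IsLieMonomial a → IsLieMonomial b →
      IsLieMonomial ⁅a, b⁆

/-- The ℓ¹ Lie norm: infimum of `Σᵢ |cᵢ|` over all finite presentations
`u = Σᵢ cᵢ • mᵢ` with real coefficients `cᵢ` and Lie monomials `mᵢ`. -/
def lieL1Norm {X : Type*} (u : FreeLieAlgebra ℝ X) : ℝ :=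
  sInf { s : ℝ | ∃ (n : ℕ) (c : Fin n → ℝ) (m : Fin n → FreeLieAlgebra ℝ X),
    (∀ i, IsLieMonomial (m i)) ∧ u = ∑ i, c i • m i ∧ s = ∑ i, |c i| }

/-- The ℓ¹ norm on the free associative algebra: the sum of the absolute values of
the coefficients in the basis of words in the generators. -/
def algL1Norm {X : Type*} (u : FreeAlgebra ℝ X) : ℝ :=
  (FreeAlgebra.equivMonoidAlgebraFreeMonoid u).coeff.sum fun _ c => |c|


namespace DSWAux

lemma isLieMonomial_rightBracket {X : Type*} :
    ∀ l : List (FreeLieAlgebra ℝ X), l ≠ [] → (∀ a ∈ l, IsLieMonomial a) →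
      IsLieMonomial (rightBracket l)
  | [], h, _ => absurd rfl h
  | [a], _, h => by simpa [rightBracket] using h a (by simp)
  | a :: b :: t, _, h => by
      rw [rightBracket]
      exact IsLieMonomial.bracket (h a (by simp))
        (isLieMonomial_rightBracket (b :: t) (by simp)
          (fun x hx => h x (List.mem_cons_of_mem _ hx)))

/-- The word in the free monoid associated to a permutation. -/
def word {k : ℕ} (σ : Equiv.Perm (Fin k)) : FreeMonoid (Fin k) :=
  (List.ofFn fun i => FreeMonoid.of (σ i)).prod

/-- The associative Magnus coefficient. -/
def magCoeff (k : ℕ) (σ : Equiv.Perm (Fin k)) : ℝ :=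
  (-1 : ℝ) ^ descents σ * ((ascents σ).factorial : ℝ) * ((descents σ).factorial : ℝ) /
    (k.factorial : ℝ)

lemma toList_map_of_prod {α : Type*} (l : List α) :
    FreeMonoid.toList (l.map FreeMonoid.of).prod = l := by
  induction l with
  | nil => rfl
  | cons a t ih => simp only [List.map_cons, List.prod_cons, FreeMonoid.toList_mul, ih]; rfl

lemma toList_word {k : ℕ} (σ : Equiv.Perm (Fin k)) :
    FreeMonoid.toList (word σ) = List.ofFn σ := by
  rw [word, show (List.ofFn fun i => FreeMonoid.of (σ i)) = (List.ofFn σ).map FreeMonoid.of by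
    rw [List.map_ofFn]; rfl]
  exact toList_map_of_prod _

lemma word_injective {k : ℕ} : Function.Injective (word (k := k)) := by
  intro σ τ h
  have h2 : List.ofFn σ = List.ofFn τ := by rw [← toList_word, ← toList_word, h]
  exact Equiv.coe_fn_injective (List.ofFn_injective h2)

lemma list_prod_single {M : Type*} [Monoid M] (l : List M) :
    (l.map fun m => MonoidAlgebra.single (R := ℝ) m 1).prod = MonoidAlgebra.single l.prod 1 := by
  induction l with
  | nil => simp [MonoidAlgebra.one_def]
  | cons a t ih => simp [ih, MonoidAlgebra.single_mul_single]

lemma equiv_magnus (k : ℕ) :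
    FreeAlgebra.equivMonoidAlgebraFreeMonoid (magnus ℝ k)
      = ∑ σ : Equiv.Perm (Fin k), MonoidAlgebra.single (word σ) (magCoeff k σ) := by
  unfold magnus
  rw [map_sum]
  refine Finset.sum_congr rfl fun σ _ => ?_
  rw [map_smul, map_list_prod]
  have h1 : ((List.ofFn fun i : Fin k => FreeAlgebra.ι ℝ (σ i)).map
      FreeAlgebra.equivMonoidAlgebraFreeMonoid)
      = (List.ofFn fun i : Fin k => FreeMonoid.of (σ i)).map
          (fun m => MonoidAlgebra.single (R := ℝ) m 1) := by
    rw [List.map_ofFn, List.map_ofFn]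
    congr 1
    funext i
    simp [FreeAlgebra.equivMonoidAlgebraFreeMonoid, Function.comp]
  rw [h1, list_prod_single, MonoidAlgebra.smul_single', mul_one, word, magCoeff]

lemma algL1Norm_magnus (k : ℕ) :
    algL1Norm (magnus ℝ k) = ∑ σ : Equiv.Perm (Fin k), |magCoeff k σ| := by
  rw [algL1Norm, equiv_magnus]
  simp only [MonoidAlgebra.coeff_sum, MonoidAlgebra.coeff_single]
  set f : FreeMonoid (Fin k) →₀ ℝ :=
    ∑ σ : Equiv.Perm (Fin k), Finsupp.single (word σ) (magCoeff k σ) with hf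
  have happ : ∀ σ : Equiv.Perm (Fin k), f (word σ) = magCoeff k σ := by
    intro σ
    rw [hf, Finset.sum_apply']
    rw [Finset.sum_eq_single σ]
    · simp [Finsupp.single_apply]
    · intro τ _ hτ
      rw [Finsupp.single_apply, if_neg (fun h => hτ (word_injective h))]
    · simp
  have hsub : f.support ⊆ Finset.univ.image word := by
    intro a ha
    rw [hf] at ha
    obtain ⟨σ, _, hσ⟩ := Finsupp.mem_support_finset_sum a ha
    have := Finsupp.support_single_subset hσ
    rw [Finset.mem_singleton] at this
    subst this
    exact Finset.mem_image.2 ⟨σ, Finset.mem_univ σ, rfl⟩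
  have : (f.sum fun _ c => |c|) = ∑ a ∈ Finset.univ.image word, |f a| := by
    rw [Finsupp.sum]
    refine Finset.sum_subset hsub fun x _ hx => ?_
    rw [Finsupp.notMem_support_iff.1 hx, abs_zero]
  rw [this, Finset.sum_image (fun σ _ τ _ h => word_injective h)]
  exact Finset.sum_congr rfl fun σ _ => by rw [happ]

end DSWAux

/-- Dynkin–Specht–Wever bound: `‖μ_k^Lie‖_{ℓ¹} ≤ (1/k)·|μ_k|_{ℓ¹}`. -/
theorem lieL1Norm_magnusLie_le (k : ℕ) (hk : 1 ≤ k) :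
    lieL1Norm (magnusLie ℝ k) ≤ (1 / (k : ℝ)) * algL1Norm (magnus ℝ k) := by
  classical
  have hk0 : (0 : ℝ) < (k : ℝ) := by exact_mod_cast hk
  -- rewrite magnusLie with coefficients magCoeff σ / k
  have hLie : magnusLie ℝ k = ∑ σ : Equiv.Perm (Fin k),
      (DSWAux.magCoeff k σ / (k : ℝ)) •
        rightBracket (List.ofFn fun i : Fin k => FreeLieAlgebra.of ℝ (σ i)) := by
    unfold magnusLie
    refine Finset.sum_congr rfl fun σ _ => ?_
    rw [DSWAux.magCoeff, div_div]
  set n := Fintype.card (Equiv.Perm (Fin k)) with hn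
  set e : Fin n ≃ Equiv.Perm (Fin k) := (Fintype.equivFin (Equiv.Perm (Fin k))).symm with he
  have hmem : (∑ σ : Equiv.Perm (Fin k), |DSWAux.magCoeff k σ / (k : ℝ)|) ∈
      { s : ℝ | ∃ (n : ℕ) (c : Fin n → ℝ) (m : Fin n → FreeLieAlgebra ℝ (Fin k)),
        (∀ i, IsLieMonomial (m i)) ∧ magnusLie ℝ k = ∑ i, c i • m i ∧ s = ∑ i, |c i| } := by
    refine ⟨n, fun i => DSWAux.magCoeff k (e i) / (k : ℝ),
      fun i => rightBracket (List.ofFn fun j : Fin k => FreeLieAlgebra.of ℝ ((e i) j)),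
      fun i => ?_, ?_, ?_⟩
    · refine DSWAux.isLieMonomial_rightBracket _ ?_ ?_
      · simp only [ne_eq, List.ofFn_eq_nil_iff]; omega
      · intro a ha
        rw [List.mem_ofFn] at ha
        obtain ⟨j, rfl⟩ := ha
        exact IsLieMonomial.of _
    · rw [hLie, ← Equiv.sum_comp e (fun σ => (DSWAux.magCoeff k σ / (k : ℝ)) •
        rightBracket (List.ofFn fun i : Fin k => FreeLieAlgebra.of ℝ (σ i)))]
    · rw [← Equiv.sum_comp e (fun σ => |DSWAux.magCoeff k σ / (k : ℝ)|)]
  have hbdd : BddBelow { s : ℝ | ∃ (n : ℕ) (c : Fin n → ℝ)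
      (m : Fin n → FreeLieAlgebra ℝ (Fin k)),
      (∀ i, IsLieMonomial (m i)) ∧ magnusLie ℝ k = ∑ i, c i • m i ∧ s = ∑ i, |c i| } := by
    refine ⟨0, fun s hs => ?_⟩
    obtain ⟨n, c, m, _, _, rfl⟩ := hs
    exact Finset.sum_nonneg fun i _ => abs_nonneg _
  have h1 : lieL1Norm (magnusLie ℝ k) ≤ ∑ σ : Equiv.Perm (Fin k),
      |DSWAux.magCoeff k σ / (k : ℝ)| := csInf_le hbdd hmem
  refine h1.trans ?_
  rw [DSWAux.algL1Norm_magnus, Finset.mul_sum]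
  refine le_of_eq (Finset.sum_congr rfl fun σ _ => ?_)
  rw [abs_div, abs_of_pos hk0, div_eq_mul_inv, mul_comm, one_div]


end
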